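/- (Shearer's Lemma, fractional cover version) Let ψ = (ψ₁,…,ψ_m) be a random vector of discrete random variables, and let α : 2^{[m]} → ℝ_{≥0} satisfy ∑_{A ∋ i} α_A = 1 for every i ∈ [m]. Then H(ψ) ≤ ∑_{A ⊆ [m]} α_A · H(ψ_A), where ψ_A = (ψ_i : i ∈ A) and H denotes Shannon entropy (base 2). -/

import Mathlib

/-- The (base-2) Shannon entropy of a discrete random variable `f` on a finite
probability space with mass function `p`. -/
noncomputable def entropy {Ω : Type*} [Fintype Ω] (p : Ω → ℝ)
    {γ : Type*} [Fintype γ] [DecidableEq γ] (f : Ω → γ) : ℝ :=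
  - ∑ y : γ,
      (∑ ω ∈ Finset.univ.filter (fun ω => f ω = y), p ω) *
        Real.logb 2 (∑ ω ∈ Finset.univ.filter (fun ω => f ω = y), p ω)

namespace Shearer

variable {Ω : Type*} [Fintype Ω] (p : Ω → ℝ)

noncomputable def dist {γ : Type*} [Fintype γ] [DecidableEq γ] (f : Ω → γ) (y : γ) : ℝ :=
  ∑ ω ∈ Finset.univ.filter (fun ω => f ω = y), p ω

lemma entropy_eq_dist {γ : Type*} [Fintype γ] [DecidableEq γ] (f : Ω → γ) :
    entropy p f = - ∑ y : γ, dist p f y * Real.logb 2 (dist p f y) := rfl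

lemma dist_nonneg (hp0 : ∀ ω, 0 ≤ p ω) {γ : Type*} [Fintype γ] [DecidableEq γ]
    (f : Ω → γ) (y : γ) : 0 ≤ dist p f y :=
  Finset.sum_nonneg fun ω _ => hp0 ω

lemma sum_dist {γ : Type*} [Fintype γ] [DecidableEq γ] (f : Ω → γ) :
    ∑ y : γ, dist p f y = ∑ ω, p ω :=
  Finset.sum_fiberwise _ f p

lemma dist_congr {γ δ : Type*} [Fintype γ] [DecidableEq γ] [Fintype δ] [DecidableEq δ]
    {f : Ω → γ} {g : Ω → δ} {y : γ} {z : δ} (h : ∀ ω, f ω = y ↔ g ω = z) :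
    dist p f y = dist p g z := by
  unfold dist
  congr 1
  ext ω
  simp [h ω]

lemma dist_pair_fst {γ δ : Type*} [Fintype γ] [DecidableEq γ] [Fintype δ] [DecidableEq δ]
    (f : Ω → γ) (g : Ω → δ) (y : γ) :
    dist p f y = ∑ z : δ, dist p (fun ω => (f ω, g ω)) (y, z) := by
  unfold dist
  simp only [Finset.sum_filter]
  rw [Finset.sum_comm]
  refine Finset.sum_congr rfl fun ω _ => ?_
  simp [Prod.ext_iff, ite_and, eq_comm]

lemma dist_pair_snd {γ δ : Type*} [Fintype γ] [DecidableEq γ] [Fintype δ] [DecidableEq δ]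
    (f : Ω → γ) (g : Ω → δ) (z : δ) :
    dist p g z = ∑ y : γ, dist p (fun ω => (f ω, g ω)) (y, z) := by
  unfold dist
  simp only [Finset.sum_filter]
  rw [Finset.sum_comm]
  refine Finset.sum_congr rfl fun ω _ => ?_
  simp [Prod.ext_iff, ite_and, eq_comm]

lemma entropy_comp_injective {γ δ : Type*} [Fintype γ] [DecidableEq γ] [Fintype δ]
    [DecidableEq δ] (f : Ω → γ) (k : γ → δ) (hk : Function.Injective k) :
    entropy p (fun ω => k (f ω)) = entropy p f := by
  rw [entropy_eq_dist, entropy_eq_dist, neg_inj]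
  rw [← Finset.sum_subset (Finset.subset_univ (Finset.univ.image k))]
  · rw [Finset.sum_image (fun a _ b _ h => hk h)]
    refine Finset.sum_congr rfl fun y _ => ?_
    rw [dist_congr p (fun ω => (hk.eq_iff (a := f ω) (b := y)))]
  · intro z _ hz
    have : dist p (fun ω => k (f ω)) z = 0 := by
      unfold dist
      rw [Finset.filter_false_of_mem, Finset.sum_empty]
      intro ω _ h
      exact hz (Finset.mem_image.2 ⟨f ω, Finset.mem_univ _, h⟩)
    simp [this]

noncomputable def nent {γ : Type*} [Fintype γ] [DecidableEq γ] (f : Ω → γ) : ℝ :=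
  - ∑ y : γ, dist p f y * Real.log (dist p f y)

lemma entropy_eq_nent {γ : Type*} [Fintype γ] [DecidableEq γ] (f : Ω → γ) :
    entropy p f = nent p f / Real.log 2 := by
  rw [entropy_eq_dist, nent, neg_div, neg_inj, Finset.sum_div]
  refine Finset.sum_congr rfl fun y _ => ?_
  rw [Real.logb, mul_div_assoc]

lemma nent_submodular (hp0 : ∀ ω, 0 ≤ p ω) (hp1 : ∑ ω, p ω = 1)
    {X Y Z : Type*} [Fintype X] [DecidableEq X] [Fintype Y] [DecidableEq Y]
    [Fintype Z] [DecidableEq Z] (u : Ω → X) (v : Ω → Y) (w : Ω → Z) :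
    nent p (fun ω => (u ω, (v ω, w ω))) + nent p v ≤
      nent p (fun ω => (u ω, v ω)) + nent p (fun ω => (v ω, w ω)) := by
  set d : X × (Y × Z) → ℝ := dist p (fun ω => (u ω, (v ω, w ω))) with hd
  set duv : X × Y → ℝ := dist p (fun ω => (u ω, v ω)) with hduvdef
  set dvw : Y × Z → ℝ := dist p (fun ω => (v ω, w ω)) with hdvwdef
  set dv : Y → ℝ := dist p v with hdvdef
  have dnn : ∀ s, 0 ≤ d s := fun s => dist_nonneg p hp0 _ s
  have duvnn : ∀ s, 0 ≤ duv s := fun s => dist_nonneg p hp0 _ s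
  have dvwnn : ∀ s, 0 ≤ dvw s := fun s => dist_nonneg p hp0 _ s
  have dvnn : ∀ y, 0 ≤ dv y := fun y => dist_nonneg p hp0 _ y
  have hduv : ∀ x y, duv (x, y) = ∑ z : Z, d (x, (y, z)) := by
    intro x y
    rw [hduvdef, dist_pair_fst p (fun ω => (u ω, v ω)) w (x, y)]
    refine Finset.sum_congr rfl fun z _ => ?_
    refine dist_congr p fun ω => ?_
    simp only [Prod.ext_iff]
    tauto
  have hdvw : ∀ y z, dvw (y, z) = ∑ x : X, d (x, (y, z)) := fun y z =>
    dist_pair_snd p u (fun ω => (v ω, w ω)) (y, z)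
  have hdv : ∀ y, dv y = ∑ z : Z, dvw (y, z) := fun y => dist_pair_fst p v w y
  have hdv' : ∀ y, dv y = ∑ x : X, duv (x, y) := fun y => dist_pair_snd p u v y
  have hdsum : ∑ s, d s = 1 := by rw [hd, sum_dist]; exact hp1
  have hdvsum : ∑ y, dv y = 1 := by rw [hdvdef, sum_dist]; exact hp1
  set a : X × (Y × Z) → ℝ := fun s => duv (s.1, s.2.1) * dvw s.2 / dv s.2.1 with ha
  have hasum : ∑ s, a s ≤ 1 := by
    have step : ∀ y : Y, (∑ x : X, ∑ z : Z, duv (x, y) * dvw (y, z) / dv y)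
        = dv y * dv y / dv y := by
      intro y
      have e1 : ∀ x : X, (∑ z : Z, duv (x, y) * dvw (y, z) / dv y)
          = duv (x, y) * (∑ z : Z, dvw (y, z)) / dv y := by
        intro x
        rw [← Finset.sum_div, ← Finset.mul_sum]
      rw [Finset.sum_congr rfl fun x _ => e1 x, ← Finset.sum_div, ← Finset.sum_mul,
        ← hdv y, ← hdv' y]
    calc ∑ s, a s = ∑ x : X, ∑ y : Y, ∑ z : Z, duv (x, y) * dvw (y, z) / dv y := by
          rw [Fintype.sum_prod_type]
          exact Finset.sum_congr rfl fun x _ => by rw [Fintype.sum_prod_type]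
      _ = ∑ y : Y, ∑ x : X, ∑ z : Z, duv (x, y) * dvw (y, z) / dv y := Finset.sum_comm
      _ = ∑ y : Y, dv y * dv y / dv y := Finset.sum_congr rfl fun y _ => step y
      _ ≤ ∑ y : Y, dv y := by
          refine Finset.sum_le_sum fun y _ => ?_
          rcases eq_or_lt_of_le (dvnn y) with h | h
          · simp [← h]
          · rw [mul_div_assoc, div_self h.ne', mul_one]
      _ = 1 := hdvsum
  have key : ∀ s : X × (Y × Z),
      d s * Real.log (duv (s.1, s.2.1)) + d s * Real.log (dvw s.2) ≤
        d s * Real.log (d s) + d s * Real.log (dv s.2.1) + (a s - d s) := by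
    rintro ⟨x, y, z⟩
    simp only
    rcases eq_or_lt_of_le (dnn (x, (y, z))) with h0 | h0
    · rw [← h0]
      have : (0:ℝ) ≤ a (x, (y, z)) := div_nonneg (mul_nonneg (duvnn _) (dvwnn _)) (dvnn _)
      simp only [zero_mul, add_zero, zero_add]
      linarith
    · have h1 : 0 < duv (x, y) := by
        rw [hduv x y]
        exact lt_of_lt_of_le h0 (Finset.single_le_sum (fun z' _ => dnn (x, (y, z'))) (Finset.mem_univ z))
      have h2 : 0 < dvw (y, z) := by
        rw [hdvw y z]
        exact lt_of_lt_of_le h0 (Finset.single_le_sum (fun x' _ => dnn (x', (y, z))) (Finset.mem_univ x))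
      have h3 : 0 < dv y := by
        rw [hdv y]
        exact lt_of_lt_of_le h2 (Finset.single_le_sum (fun z' _ => dvwnn (y, z')) (Finset.mem_univ z))
      have haval : a (x, (y, z)) = duv (x, y) * dvw (y, z) / dv y := rfl
      have hapos : 0 < a (x, (y, z)) := by
        rw [haval]; exact div_pos (mul_pos h1 h2) h3
      have hlog : Real.log (a (x, (y, z)) / d (x, (y, z))) =
          Real.log (duv (x, y)) + Real.log (dvw (y, z)) - Real.log (dv y)
            - Real.log (d (x, (y, z))) := by
        rw [Real.log_div hapos.ne' h0.ne', haval,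
          Real.log_div (mul_pos h1 h2).ne' h3.ne', Real.log_mul h1.ne' h2.ne']
      have hb : d (x, (y, z)) * Real.log (a (x, (y, z)) / d (x, (y, z))) ≤
          a (x, (y, z)) - d (x, (y, z)) := by
        calc d (x, (y, z)) * Real.log (a (x, (y, z)) / d (x, (y, z)))
            ≤ d (x, (y, z)) * (a (x, (y, z)) / d (x, (y, z)) - 1) := by
              exact mul_le_mul_of_nonneg_left
                (Real.log_le_sub_one_of_pos (div_pos hapos h0)) h0.le
          _ = a (x, (y, z)) - d (x, (y, z)) := by
              rw [mul_sub, mul_one, mul_div_cancel₀ _ h0.ne']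
      rw [hlog] at hb
      nlinarith [hb]
  calc (nent p (fun ω => (u ω, v ω))) + (nent p (fun ω => (v ω, w ω)))
      = -((∑ s : X × Y, duv s * Real.log (duv s)) +
          ∑ s : Y × Z, dvw s * Real.log (dvw s)) := by rw [nent, nent, neg_add]
    _ = -((∑ s : X × (Y × Z), d s * Real.log (duv (s.1, s.2.1))) +
          ∑ s : X × (Y × Z), d s * Real.log (dvw s.2)) := by
        congr 1
        congr 1
        · rw [Fintype.sum_prod_type, Fintype.sum_prod_type]
          refine Finset.sum_congr rfl fun x _ => ?_
          rw [Fintype.sum_prod_type]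
          refine Finset.sum_congr rfl fun y _ => ?_
          rw [hduv x y, Finset.sum_mul]
          simp [← hduv]
        · rw [Fintype.sum_prod_type (f := fun s : X × (Y × Z) => d s * Real.log (dvw s.2)),
            Finset.sum_comm]
          refine Finset.sum_congr rfl fun s _ => ?_
          obtain ⟨yy, zz⟩ := s
          rw [hdvw yy zz, Finset.sum_mul]
          simp [← hdvw]
    _ ≥ -((∑ s : X × (Y × Z), d s * Real.log (d s)) +
          ∑ s : X × (Y × Z), d s * Real.log (dv s.2.1)) := by
        rw [ge_iff_le, neg_le_neg_iff]
        have := Finset.sum_le_sum fun s (_ : s ∈ Finset.univ) => key s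
        rw [Finset.sum_add_distrib] at this
        have h2 : ∑ s : X × (Y × Z),
            (d s * Real.log (d s) + d s * Real.log (dv s.2.1) + (a s - d s)) =
            (∑ s : X × (Y × Z), d s * Real.log (d s)) +
              (∑ s : X × (Y × Z), d s * Real.log (dv s.2.1)) +
              ((∑ s, a s) - ∑ s, d s) := by
          rw [Finset.sum_add_distrib, Finset.sum_add_distrib, Finset.sum_sub_distrib]
        rw [h2] at this
        have h3 : (∑ s, a s) - (∑ s, d s) ≤ 0 := by rw [hdsum]; linarith
        linarith
    _ = (nent p (fun ω => (u ω, (v ω, w ω)))) + (nent p v) := by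
        rw [nent, nent, neg_add]
        congr 2
        rw [Fintype.sum_prod_type (f := fun s : X × (Y × Z) => d s * Real.log (dv s.2.1)),
          Finset.sum_comm, Fintype.sum_prod_type]
        refine Finset.sum_congr rfl fun y _ => ?_
        have e1 : ∀ z : Z, (∑ x : X, d (x, (y, z)) * Real.log (dv y))
            = dvw (y, z) * Real.log (dv y) := by
          intro z
          rw [← Finset.sum_mul, ← hdvw y z]
        calc ∑ z : Z, ∑ x : X, d (x, (y, z)) * Real.log (dv ((y, z)).1)
            = ∑ z : Z, dvw (y, z) * Real.log (dv y) :=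
              Finset.sum_congr rfl fun z _ => e1 z
          _ = dv y * Real.log (dv y) := by rw [← Finset.sum_mul, ← hdv y]

lemma nent_comp_injective {γ δ : Type*} [Fintype γ] [DecidableEq γ] [Fintype δ]
    [DecidableEq δ] (f : Ω → γ) (k : γ → δ) (hk : Function.Injective k) :
    nent p (fun ω => k (f ω)) = nent p f := by
  have h := entropy_comp_injective p f k hk
  rw [entropy_eq_nent, entropy_eq_nent] at h
  have h2 : Real.log 2 ≠ 0 := (Real.log_pos one_lt_two).ne'
  field_simp at h
  exact h

set_option maxHeartbeats 1000000 in
lemma entropy_cond_mono (hp0 : ∀ ω, 0 ≤ p ω) (hp1 : ∑ ω, p ω = 1)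
    {X Y Z : Type*} [Fintype X] [DecidableEq X] [Fintype Y] [DecidableEq Y]
    [Fintype Z] [DecidableEq Z] (f : Ω → X) (h : Ω → Z) (k : Z → Y) :
    entropy p (fun ω => (f ω, h ω)) + entropy p (fun ω => k (h ω)) ≤
      entropy p (fun ω => (f ω, k (h ω))) + entropy p h := by
  have hsub := nent_submodular p hp0 hp1 f (fun ω => k (h ω)) h
  have e1 : nent p (fun ω => (f ω, (k (h ω), h ω))) = nent p (fun ω => (f ω, h ω)) := by
    have hk'' : Function.Injective (fun s : X × Z => (s.1, (k s.2, s.2))) := by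
      intro s t hst
      simp only [Prod.ext_iff] at hst
      exact Prod.ext_iff.2 ⟨hst.1, hst.2.2⟩
    exact nent_comp_injective p (fun ω => (f ω, h ω)) (fun s : X × Z => (s.1, (k s.2, s.2))) hk''
  have e2 : nent p (fun ω => (k (h ω), h ω)) = nent p h := by
    have hk' : Function.Injective (fun z : Z => (k z, z)) := fun a b hab =>
      congrArg Prod.snd hab
    exact nent_comp_injective p h (fun z : Z => (k z, z)) hk'
  rw [e1, e2] at hsub
  have hc : (0 : ℝ) < Real.log 2 := Real.log_pos one_lt_two
  rw [entropy_eq_nent, entropy_eq_nent, entropy_eq_nent, entropy_eq_nent,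
    ← add_div, ← add_div]
  exact div_le_div_of_nonneg_right hsub hc.le

section Psi

variable {m : ℕ} {β : Fin m → Type*} [∀ i, Fintype (β i)] [∀ i, DecidableEq (β i)]
  (ψ : ∀ i : Fin m, Ω → β i)

noncomputable def E (A : Finset (Fin m)) : ℝ :=
  entropy p (fun ω (i : A) => ψ i.1 ω)

lemma E_empty (hp1 : ∑ ω, p ω = 1) : E p ψ ∅ = 0 := by
  have hsub : ∀ y z : (∀ i : (∅ : Finset (Fin m)), β i.1), y = z := fun y z =>
    funext fun i => absurd i.2 (Finset.notMem_empty i.1)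
  haveI : Subsingleton (∀ i : (∅ : Finset (Fin m)), β i.1) := ⟨hsub⟩
  haveI : Nonempty (∀ i : (∅ : Finset (Fin m)), β i.1) :=
    ⟨fun i => absurd i.2 (Finset.notMem_empty i.1)⟩
  haveI : Unique (∀ i : (∅ : Finset (Fin m)), β i.1) := uniqueOfSubsingleton
    (Classical.choice ‹_›)
  rw [E, entropy_eq_dist, Fintype.sum_unique]
  have : dist p (fun ω (i : (∅ : Finset (Fin m))) => ψ i.1 ω) default = 1 := by
    rw [dist, Finset.filter_true_of_mem (fun ω _ => Subsingleton.elim _ _)]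
    exact hp1
  rw [this]
  simp

lemma E_union (A B : Finset (Fin m)) :
    entropy p (fun ω => ((fun i : A => ψ i.1 ω), (fun i : B => ψ i.1 ω))) =
      E p ψ (A ∪ B) := by
  have hk : Function.Injective (fun (g : ∀ i : (A ∪ B : Finset (Fin m)), β i.1) =>
      ((fun i : A => g ⟨i.1, Finset.mem_union_left B i.2⟩),
        (fun i : B => g ⟨i.1, Finset.mem_union_right A i.2⟩))) := by
    intro g g' hgg
    funext j
    rcases Finset.mem_union.1 j.2 with hj | hj
    · exact congrFun (congrArg Prod.fst hgg) ⟨j.1, hj⟩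
    · exact congrFun (congrArg Prod.snd hgg) ⟨j.1, hj⟩
  exact entropy_comp_injective p (fun ω (i : (A ∪ B : Finset (Fin m))) => ψ i.1 ω)
    (fun (g : ∀ i : (A ∪ B : Finset (Fin m)), β i.1) =>
      ((fun i : A => g ⟨i.1, Finset.mem_union_left B i.2⟩),
        (fun i : B => g ⟨i.1, Finset.mem_union_right A i.2⟩))) hk

lemma E_mono_cond (hp0 : ∀ ω, 0 ≤ p ω) (hp1 : ∑ ω, p ω = 1)
    {A B : Finset (Fin m)} (hAB : A ⊆ B) (i : Fin m) :
    E p ψ (insert i B) + E p ψ A ≤ E p ψ (insert i A) + E p ψ B := by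
  have h := entropy_cond_mono p hp0 hp1
    (f := fun ω (j : ({i} : Finset (Fin m))) => ψ j.1 ω)
    (h := fun ω (j : B) => ψ j.1 ω)
    (k := fun (g : ∀ j : B, β j.1) (j : A) => g ⟨j.1, hAB j.2⟩)
  have h2 : entropy p (fun ω => ((fun j : ({i} : Finset (Fin m)) => ψ j.1 ω),
        (fun j : B => ψ j.1 ω))) + E p ψ A ≤
      entropy p (fun ω => ((fun j : ({i} : Finset (Fin m)) => ψ j.1 ω),
        (fun j : A => ψ j.1 ω))) + E p ψ B := h
  rw [E_union, E_union] at h2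
  rw [Finset.insert_eq, Finset.insert_eq]
  exact h2

lemma E_chain (A : Finset (Fin m)) (hp1 : ∑ ω, p ω = 1) :
    E p ψ A = ∑ i ∈ A,
      (E p ψ (insert i (A ∩ Finset.Iio i)) - E p ψ (A ∩ Finset.Iio i)) := by
  induction A using Finset.strongInduction with
  | _ A ih =>
    rcases A.eq_empty_or_nonempty with rfl | hA
    · simp [E_empty p ψ hp1]
    · set i := A.max' hA with hidef
      have hi : i ∈ A := A.max'_mem hA
      have key : A ∩ Finset.Iio i = A.erase i := by
        ext x
        simp only [Finset.mem_inter, Finset.mem_Iio, Finset.mem_erase]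
        constructor
        · rintro ⟨hxA, hxi⟩; exact ⟨ne_of_lt hxi, hxA⟩
        · rintro ⟨hne, hxA⟩; exact ⟨hxA, lt_of_le_of_ne (A.le_max' x hxA) hne⟩
      have hsub : A.erase i ⊂ A := Finset.erase_ssubset hi
      have hrest : ∀ j ∈ A.erase i, A ∩ Finset.Iio j = A.erase i ∩ Finset.Iio j := by
        intro j hj
        have hji : j < i := lt_of_le_of_ne (A.le_max' j (Finset.mem_of_mem_erase hj))
          (Finset.ne_of_mem_erase hj)
        ext x
        simp only [Finset.mem_inter, Finset.mem_Iio, Finset.mem_erase]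
        constructor
        · rintro ⟨hxA, hxj⟩; exact ⟨⟨ne_of_lt (lt_trans hxj hji), hxA⟩, hxj⟩
        · rintro ⟨⟨_, hxA⟩, hxj⟩; exact ⟨hxA, hxj⟩
      rw [← Finset.add_sum_erase _ _ hi, key,
        Finset.sum_congr rfl (fun j hj => by rw [hrest j hj]),
        ← ih _ hsub, Finset.insert_erase hi]
      ring

lemma E_ge_sum (hp0 : ∀ ω, 0 ≤ p ω) (hp1 : ∑ ω, p ω = 1) (A : Finset (Fin m)) :
    ∑ i ∈ A, (E p ψ (insert i (Finset.Iio i)) - E p ψ (Finset.Iio i)) ≤ E p ψ A := by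
  rw [E_chain p ψ A hp1]
  refine Finset.sum_le_sum fun i hi => ?_
  have hM := E_mono_cond p ψ hp0 hp1
    (Finset.inter_subset_right : A ∩ Finset.Iio i ⊆ Finset.Iio i) i
  linarith

lemma E_univ_eq (hp1 : ∑ ω, p ω = 1) :
    E p ψ Finset.univ = ∑ i : Fin m,
      (E p ψ (insert i (Finset.Iio i)) - E p ψ (Finset.Iio i)) := by
  rw [E_chain p ψ Finset.univ hp1]
  simp [Finset.univ_inter]

end Psi

end Shearer


/-- Shearer's lemma, fractional cover version. -/
theorem shearer {m : ℕ} (β : Fin m → Type*) [∀ i, Fintype (β i)] [∀ i, DecidableEq (β i)]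
    {Ω : Type*} [Fintype Ω] (p : Ω → ℝ) (hp0 : ∀ ω, 0 ≤ p ω) (hp1 : ∑ ω, p ω = 1)
    (ψ : ∀ i : Fin m, Ω → β i) (α : Finset (Fin m) → ℝ) (hα0 : ∀ A, 0 ≤ α A)
    (hα1 : ∀ i : Fin m, ∑ A ∈ Finset.univ.filter (fun A : Finset (Fin m) => i ∈ A), α A = 1) :
    entropy p (fun ω (i : Fin m) => ψ i ω) ≤
      ∑ A : Finset (Fin m), α A * entropy p (fun ω (i : A) => ψ i.1 ω) := by
    classical
  open Shearer in
  set c : Fin m → ℝ := fun i =>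
    E p ψ (insert i (Finset.Iio i)) - E p ψ (Finset.Iio i) with hc
  have hk : Function.Injective (fun (g : ∀ i : Fin m, β i)
      (i : (Finset.univ : Finset (Fin m))) => g i.1) := by
    intro g g' hgg
    funext j
    exact congrFun hgg ⟨j, Finset.mem_univ j⟩
  have h0 : E p ψ Finset.univ = entropy p (fun ω (i : Fin m) => ψ i ω) :=
    entropy_comp_injective p (fun ω (i : Fin m) => ψ i ω)
      (fun (g : ∀ i : Fin m, β i) (i : (Finset.univ : Finset (Fin m))) => g i.1) hk
  have h2 : ∑ A : Finset (Fin m), α A * (∑ i ∈ A, c i) = ∑ i : Fin m, c i := by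
    calc ∑ A : Finset (Fin m), α A * (∑ i ∈ A, c i)
        = ∑ A : Finset (Fin m), ∑ i : Fin m, (if i ∈ A then α A * c i else 0) := by
          refine Finset.sum_congr rfl fun A _ => ?_
          rw [Finset.sum_ite_mem, Finset.univ_inter, Finset.mul_sum]
      _ = ∑ i : Fin m, ∑ A : Finset (Fin m), (if i ∈ A then α A * c i else 0) :=
          Finset.sum_comm
      _ = ∑ i : Fin m, (∑ A ∈ Finset.univ.filter (fun A : Finset (Fin m) => i ∈ A), α A)
            * c i := by
          refine Finset.sum_congr rfl fun i _ => ?_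
          rw [Finset.sum_mul, Finset.sum_filter]
      _ = ∑ i : Fin m, c i := by
          refine Finset.sum_congr rfl fun i _ => ?_
          rw [hα1 i, one_mul]
  calc entropy p (fun ω (i : Fin m) => ψ i ω) = E p ψ Finset.univ := h0.symm
    _ = ∑ i : Fin m, c i := E_univ_eq p ψ hp1
    _ = ∑ A : Finset (Fin m), α A * (∑ i ∈ A, c i) := h2.symm
    _ ≤ ∑ A : Finset (Fin m), α A * E p ψ A := by
        refine Finset.sum_le_sum fun A _ => ?_
        exact mul_le_mul_of_nonneg_left (E_ge_sum p ψ hp0 hp1 A) (hα0 A)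
    _ = ∑ A : Finset (Fin m), α A * entropy p (fun ω (i : A) => ψ i.1 ω) := rfl
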